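/- In the sequential sampling-without-replacement setting with fixed losses L on pool {1,...,N}, the PURE estimator terms satisfy: for k < m, E[(a_m - R̂)(a_k - R̂)] = 0, where R̂ = (1/N)∑_{n=1}^N L(n) and a_m = L(i_m)/(N·q_m(i_m)) + (1/N)∑_{t=1}^{m-1} L(i_t). -/

import Mathlib

/-!
Sequential sampling without replacement of `M` indices from a pool `{1,…,N}`
(modelled as `Fin N`). A trajectory is a function `σ : Fin M → Fin N`;
`q m σ i` is the conditional probability that the `(m+1)`-st acquired index is
`i` given the history `σ 0, …, σ (m-1)` (it is assumed to depend only on that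
history). Expectations are sums over injective trajectories weighted by the
product of conditional probabilities.
-/

/-- Probability of a trajectory `σ` under the sequential proposals `q`. -/
noncomputable def prob (N M : ℕ) (q : Fin M → (Fin M → Fin N) → Fin N → ℝ)
    (σ : Fin M → Fin N) : ℝ :=
  ∏ m : Fin M, q m σ (σ m)

/-- Expectation of a trajectory functional under sequential sampling without
replacement with proposals `q`. -/
noncomputable def expec (N M : ℕ) (q : Fin M → (Fin M → Fin N) → Fin N → ℝ)
    (f : (Fin M → Fin N) → ℝ) : ℝ :=
  ∑ σ : Fin M → Fin N, if Function.Injective σ then prob N M q σ * f σ else 0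

/-- The PURE term `a_m = w_m·L(i_m) + (1/N)∑_{t<m} L(i_t)` with
`w_m = 1/(N·q_m(i_m))` (here `m : Fin M` is zero-based). -/
noncomputable def aTerm (N M : ℕ) (L : Fin N → ℝ)
    (q : Fin M → (Fin M → Fin N) → Fin N → ℝ) (m : Fin M)
    (σ : Fin M → Fin N) : ℝ :=
  L (σ m) / ((N : ℝ) * q m σ (σ m))
    + (1 / (N : ℝ)) * ∑ t : Fin M, if (t : ℕ) < (m : ℕ) then L (σ t) else 0

/-- The conditional variance `Var[w_m·L(i_m) | i_{1:m-1}]` as a function of the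
history (it depends on `σ` only through `σ 0, …, σ (m-1)`). -/
noncomputable def condVar (N M : ℕ) (L : Fin N → ℝ)
    (q : Fin M → (Fin M → Fin N) → Fin N → ℝ) (m : Fin M)
    (σ : Fin M → Fin N) : ℝ :=
  (∑ i : Fin N, q m σ i * (L i / ((N : ℝ) * q m σ i)) ^ 2)
    - (∑ i : Fin N, q m σ i * (L i / ((N : ℝ) * q m σ i))) ^ 2

/- auxiliary: marginalization over one coordinate -/
lemma marg {N M : ℕ} (j0 : Fin M) (g : (Fin M → Fin N) → ℝ)
    (F : (Fin M → Fin N) → Fin N → ℝ)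
    (hg : ∀ σ σ' : Fin M → Fin N, (∀ j, j ≠ j0 → σ j = σ' j) → g σ = g σ')
    (hF : ∀ σ σ' : Fin M → Fin N, (∀ j, j ≠ j0 → σ j = σ' j) → F σ = F σ') :
    (N : ℝ) * ∑ σ : Fin M → Fin N, g σ * F σ (σ j0)
      = ∑ σ : Fin M → Fin N, g σ * (∑ i : Fin N, F σ i) := by
  classical
  set e := Equiv.funSplitAt j0 (Fin N) with he
  have hsum1 : ∀ H : (Fin M → Fin N) → ℝ,
      ∑ σ : Fin M → Fin N, H σ
        = ∑ p : { j : Fin M // j ≠ j0 } → Fin N, ∑ i : Fin N, H (e.symm (i, p)) := by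
    intro H
    rw [← e.symm.sum_comp H, Fintype.sum_prod_type, Finset.sum_comm]
  have hval : ∀ (i : Fin N) (p : { j : Fin M // j ≠ j0 } → Fin N),
      (e.symm (i, p)) j0 = i := by
    intro i p; simp [he, Equiv.funSplitAt, Equiv.piSplitAt]
  have hagree : ∀ (i i' : Fin N) (p : { j : Fin M // j ≠ j0 } → Fin N),
      ∀ j, j ≠ j0 → (e.symm (i, p)) j = (e.symm (i', p)) j := by
    intro i i' p j hj; simp [he, Equiv.funSplitAt, Equiv.piSplitAt, hj]
  rw [hsum1 (fun σ => g σ * F σ (σ j0)), hsum1 (fun σ => g σ * (∑ i, F σ i)),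
    Finset.mul_sum]
  refine Finset.sum_congr rfl fun p _ => ?_
  have hind : ∀ i i' i'' : Fin N,
      g (e.symm (i, p)) * F (e.symm (i, p)) i''
        = g (e.symm (i', p)) * F (e.symm (i', p)) i'' := by
    intro i i' i''
    rw [hg _ _ (hagree i i' p), hF _ _ (hagree i i' p)]
  simp only [hval]
  calc (N:ℝ) * ∑ i : Fin N, g (e.symm (i,p)) * F (e.symm (i,p)) i
      = ∑ _i : Fin N, ∑ i' : Fin N, g (e.symm (i',p)) * F (e.symm (i',p)) i' := by
        rw [Finset.sum_const, Finset.card_univ, Fintype.card_fin, nsmul_eq_mul]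
    _ = ∑ i : Fin N, ∑ i' : Fin N, g (e.symm (i,p)) * F (e.symm (i,p)) i' := by
        exact Finset.sum_congr rfl fun i _ =>
          Finset.sum_congr rfl fun i' _ => hind i' i i'
    _ = ∑ i : Fin N, g (e.symm (i,p)) * (∑ i' : Fin N, F (e.symm (i,p)) i') := by
        simp [Finset.mul_sum]

noncomputable def Pp (N M : ℕ) (q : Fin M → (Fin M → Fin N) → Fin N → ℝ)
    (r : ℕ) (σ : Fin M → Fin N) : ℝ :=
  ∏ j : Fin M, if (j : ℕ) < r then q j σ (σ j) else 1

lemma Pp_succ {N M : ℕ} (q : Fin M → (Fin M → Fin N) → Fin N → ℝ)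
    (r : ℕ) (hr : r < M) (σ : Fin M → Fin N) :
    Pp N M q (r + 1) σ = Pp N M q r σ * q ⟨r, hr⟩ σ (σ ⟨r, hr⟩) := by
  classical
  unfold Pp
  have : ∀ j : Fin M, (if (j : ℕ) < r + 1 then q j σ (σ j) else 1)
      = (if (j : ℕ) < r then q j σ (σ j) else 1)
        * (if j = ⟨r, hr⟩ then q j σ (σ j) else 1) := by
    intro j
    rcases lt_trichotomy (j : ℕ) r with h | h | h
    · rw [if_pos (Nat.lt_succ_of_lt h), if_pos h,
        if_neg (by simp [Fin.ext_iff, Nat.ne_of_lt h]), mul_one]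
    · have hj : j = ⟨r, hr⟩ := Fin.ext h
      rw [if_pos (by omega), if_neg (by omega), if_pos hj, one_mul]
    · rw [if_neg (by omega), if_neg (by omega),
        if_neg (by simp [Fin.ext_iff]; omega), mul_one]
  rw [Finset.prod_congr rfl fun j _ => this j, Finset.prod_mul_distrib,
    Finset.prod_ite_eq' Finset.univ (⟨r, hr⟩ : Fin M) (fun j => q j σ (σ j)),
    if_pos (Finset.mem_univ _)]

lemma Pp_M {N M : ℕ} (q : Fin M → (Fin M → Fin N) → Fin N → ℝ) (σ : Fin M → Fin N) :
    Pp N M q M σ = prob N M q σ :=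
  Finset.prod_congr rfl fun j _ => if_pos j.isLt

section main
variable {N M : ℕ} {L : Fin N → ℝ} {q : Fin M → (Fin M → Fin N) → Fin N → ℝ}
variable (hdep : ∀ (m : Fin M) (σ σ' : Fin M → Fin N),
      (∀ k : Fin M, (k : ℕ) < (m : ℕ) → σ k = σ' k) → q m σ = q m σ')

include hdep in
/-- `Pp r` depends only on coordinates `< r`. -/
lemma Pp_congr (r : ℕ) (σ σ' : Fin M → Fin N)
    (h : ∀ j : Fin M, (j : ℕ) < r → σ j = σ' j) :
    Pp N M q r σ = Pp N M q r σ' := by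
  refine Finset.prod_congr rfl fun j _ => ?_
  by_cases hj : (j : ℕ) < r
  · rw [if_pos hj, if_pos hj,
      hdep j σ σ' (fun t ht => h t (ht.trans hj)), h j hj]
  · rw [if_neg hj, if_neg hj]

include hdep in
/-- `aTerm m` depends only on coordinates `≤ m`. -/
lemma aTerm_congr (m : Fin M) (σ σ' : Fin M → Fin N)
    (h : ∀ j : Fin M, (j : ℕ) ≤ (m : ℕ) → σ j = σ' j) :
    aTerm N M L q m σ = aTerm N M L q m σ' := by
  unfold aTerm
  rw [hdep m σ σ' (fun t ht => h t ht.le), h m le_rfl]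
  congr 1
  refine congrArg _ (Finset.sum_congr rfl fun t _ => ?_)
  by_cases ht : (t : ℕ) < (m : ℕ)
  · rw [if_pos ht, if_pos ht, h t ht.le]
  · rw [if_neg ht, if_neg ht]

end main

/-- Distinct PURE terms are uncorrelated: for `k < m`,
`E[(a_m - R̂)(a_k - R̂)] = 0` where `R̂ = (1/N)∑_n L(n)`. -/
theorem pure_terms_uncorrelated (N M : ℕ) (hM : 0 < M) (hMN : M ≤ N)
    (L : Fin N → ℝ) (q : Fin M → (Fin M → Fin N) → Fin N → ℝ)
    (hdep : ∀ (m : Fin M) (σ σ' : Fin M → Fin N),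
      (∀ k : Fin M, (k : ℕ) < (m : ℕ) → σ k = σ' k) → q m σ = q m σ')
    (hpos : ∀ (m : Fin M) (σ : Fin M → Fin N) (i : Fin N),
      (∀ k : Fin M, (k : ℕ) < (m : ℕ) → σ k ≠ i) → 0 < q m σ i)
    (hzero : ∀ (m : Fin M) (σ : Fin M → Fin N) (i : Fin N),
      (∃ k : Fin M, (k : ℕ) < (m : ℕ) ∧ σ k = i) → q m σ i = 0)
    (hsum : ∀ (m : Fin M) (σ : Fin M → Fin N), ∑ i : Fin N, q m σ i = 1) :
    ∀ k m : Fin M, (k : ℕ) < (m : ℕ) →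
      expec N M q (fun σ =>
        (aTerm N M L q m σ - (1 / (N : ℝ)) * ∑ n : Fin N, L n) *
        (aTerm N M L q k σ - (1 / (N : ℝ)) * ∑ n : Fin N, L n)) = 0 := by
  classical
  intro k m hkm
  have hN : 0 < N := lt_of_lt_of_le hM hMN
  have hNR : (N : ℝ) ≠ 0 := Nat.cast_ne_zero.mpr hN.ne'
  set Rhat : ℝ := (1 / (N : ℝ)) * ∑ n : Fin N, L n with hRhat
  set F : (Fin M → Fin N) → ℝ := fun σ =>
    (aTerm N M L q m σ - Rhat) * (aTerm N M L q k σ - Rhat) with hF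
  -- Step 0: non-injective trajectories have zero probability
  have hprob0 : ∀ σ : Fin M → Fin N, ¬ Function.Injective σ → prob N M q σ = 0 := by
    intro σ hσ
    rw [Function.not_injective_iff] at hσ
    obtain ⟨a, b, hab, hne⟩ := hσ
    rcases lt_or_gt_of_ne hne with h | h
    · exact Finset.prod_eq_zero (Finset.mem_univ b) (hzero b σ (σ b) ⟨a, h, hab⟩)
    · exact Finset.prod_eq_zero (Finset.mem_univ a)
        (hzero a σ (σ a) ⟨b, h, hab.symm⟩)
  have hexp : expec N M q F = ∑ σ : Fin M → Fin N, prob N M q σ * F σ := by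
    refine Finset.sum_congr rfl fun σ _ => ?_
    by_cases hσ : Function.Injective σ
    · rw [if_pos hσ]
    · rw [if_neg hσ, hprob0 σ hσ, zero_mul]
  -- F depends only on coordinates ≤ m
  have hFcongr : ∀ σ σ' : Fin M → Fin N,
      (∀ j : Fin M, (j : ℕ) ≤ (m : ℕ) → σ j = σ' j) → F σ = F σ' := by
    intro σ σ' h
    simp only [hF]
    rw [aTerm_congr hdep m σ σ' h,
      aTerm_congr hdep k σ σ' (fun j hj => h j (hj.trans hkm.le))]
  -- The base case: conditional expectation at coordinate m kills the sum
  have hbase : ∑ σ : Fin M → Fin N, Pp N M q ((m : ℕ) + 1) σ * F σ = 0 := by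
    set φ : (Fin M → Fin N) → Fin N → ℝ := fun σ i =>
      L i / ((N : ℝ) * q m σ i)
        + (1 / (N : ℝ)) * (∑ t : Fin M, if (t : ℕ) < (m : ℕ) then L (σ t) else 0)
        - Rhat with hφ
    have hsplit : ∀ σ : Fin M → Fin N,
        Pp N M q ((m : ℕ) + 1) σ * F σ
          = (Pp N M q (m : ℕ) σ * (aTerm N M L q k σ - Rhat))
            * ((fun σ i => q m σ i * φ σ i) σ (σ m)) := by
      intro σ
      have h1 : Pp N M q ((m : ℕ) + 1) σ
          = Pp N M q (m : ℕ) σ * q m σ (σ m) := by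
        have := Pp_succ q (m : ℕ) m.isLt σ
        simpa using this
      have h2 : aTerm N M L q m σ - Rhat = φ σ (σ m) := by
        simp only [hφ, aTerm]; try ring
      simp only [hF, h1, ← h2]; ring
    rw [Finset.sum_congr rfl fun σ _ => hsplit σ]
    -- apply marginalization at coordinate m
    have hmarg := marg m
      (fun σ => Pp N M q (m : ℕ) σ * (aTerm N M L q k σ - Rhat))
      (fun σ i => q m σ i * φ σ i)
      (by
        intro σ σ' h
        have hlt : ∀ j : Fin M, (j : ℕ) < (m : ℕ) → σ j = σ' j := by
          intro j hj
          exact h j (by intro hjm; rw [hjm] at hj; omega)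
        show Pp N M q (m : ℕ) σ * (aTerm N M L q k σ - Rhat)
          = Pp N M q (m : ℕ) σ' * (aTerm N M L q k σ' - Rhat)
        rw [Pp_congr hdep (m : ℕ) σ σ' hlt,
          aTerm_congr hdep k σ σ' (fun j hj => hlt j (lt_of_le_of_lt hj hkm))])
      (by
        intro σ σ' h
        have hlt : ∀ j : Fin M, (j : ℕ) < (m : ℕ) → σ j = σ' j := by
          intro j hj
          exact h j (by intro hjm; rw [hjm] at hj; omega)
        funext i
        show q m σ i * φ σ i = q m σ' i * φ σ' i
        have hq : q m σ = q m σ' := hdep m σ σ' hlt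
        have hS : (∑ t : Fin M, if (t : ℕ) < (m : ℕ) then L (σ t) else 0)
            = ∑ t : Fin M, if (t : ℕ) < (m : ℕ) then L (σ' t) else 0 := by
          refine Finset.sum_congr rfl fun t _ => ?_
          by_cases ht : (t : ℕ) < (m : ℕ)
          · rw [if_pos ht, if_pos ht, hlt t ht]
          · rw [if_neg ht, if_neg ht]
        simp only [hφ, hq, hS])
    -- inner sum is zero on injective prefixes; Pp m is zero otherwise
    have hinner : ∀ σ : Fin M → Fin N,
        (Pp N M q (m : ℕ) σ * (aTerm N M L q k σ - Rhat))
          * (∑ i : Fin N, q m σ i * φ σ i) = 0 := by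
      intro σ
      by_cases hinj : ∀ t t' : Fin M, (t : ℕ) < (t' : ℕ) → (t' : ℕ) < (m : ℕ) →
          σ t ≠ σ t'
      · -- injective prefix: conditional mean is Rhat
        have hzero' : ∑ i : Fin N, q m σ i * φ σ i = 0 := by
          set T : Finset (Fin N) :=
            (Finset.univ.filter (fun t : Fin M => (t : ℕ) < (m : ℕ))).image σ
              with hT
          have hmemT : ∀ i : Fin N, i ∈ T ↔
              ∃ t : Fin M, (t : ℕ) < (m : ℕ) ∧ σ t = i := by
            intro i; simp [hT]
          have hterm : ∀ i : Fin N,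
              q m σ i * (L i / ((N : ℝ) * q m σ i))
                = if i ∈ T then 0 else L i / (N : ℝ) := by
            intro i
            by_cases hi : i ∈ T
            · rw [if_pos hi, hzero m σ i ((hmemT i).1 hi), zero_mul]
            · rw [if_neg hi]
              have hq : q m σ i ≠ 0 := by
                refine (hpos m σ i ?_).ne'
                intro t ht
                intro hti
                exact hi ((hmemT i).2 ⟨t, ht, hti⟩)
              field_simp
          have hTsum : ∑ i ∈ T, L i
              = ∑ t : Fin M, if (t : ℕ) < (m : ℕ) then L (σ t) else 0 := by
            rw [hT, Finset.sum_image ?_, Finset.sum_filter]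
            intro t ht t' ht' htt'
            by_contra hne
            simp only [Finset.mem_coe, Finset.mem_filter] at ht ht'
            rcases lt_or_gt_of_ne hne with h | h
            · exact hinj t t' h ht'.2 htt'
            · exact hinj t' t h ht.2 htt'.symm
          have hsplitsum : ∑ i : Fin N, q m σ i * φ σ i
              = (∑ i : Fin N, q m σ i * (L i / ((N : ℝ) * q m σ i)))
                + (∑ i : Fin N, q m σ i)
                  * ((1 / (N : ℝ)) * (∑ t : Fin M,
                      if (t : ℕ) < (m : ℕ) then L (σ t) else 0) - Rhat) := by
            rw [Finset.sum_mul, ← Finset.sum_add_distrib]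
            refine Finset.sum_congr rfl fun i _ => ?_
            simp only [hφ]; ring
          rw [hsplitsum, hsum m σ,
            Finset.sum_congr rfl fun i _ => hterm i]
          have hid : ∀ i : Fin N, (if i ∈ T then 0 else L i / (N : ℝ))
              = L i / (N : ℝ) - (if i ∈ T then L i / (N : ℝ) else 0) := by
            intro i; by_cases h : i ∈ T <;> simp [h]
          rw [Finset.sum_congr rfl fun i _ => hid i, Finset.sum_sub_distrib,
            Finset.sum_ite_mem, Finset.univ_inter, ← Finset.sum_div,
            ← Finset.sum_div, hTsum, hRhat]
          ring
        rw [hzero', mul_zero]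
      · -- non-injective prefix: Pp m σ = 0
        push_neg at hinj
        obtain ⟨t, t', htt', ht'm, heq⟩ := hinj
        have hPp : Pp N M q (m : ℕ) σ = 0 := by
          refine Finset.prod_eq_zero (Finset.mem_univ t') ?_
          rw [if_pos ht'm]
          exact hzero t' σ (σ t') ⟨t, htt', heq⟩
        rw [hPp, zero_mul, zero_mul]
    have hRHS : ∑ σ : Fin M → Fin N,
        (fun σ => Pp N M q (m : ℕ) σ * (aTerm N M L q k σ - Rhat)) σ
          * (∑ i : Fin N, (fun σ i => q m σ i * φ σ i) σ i) = 0 :=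
      Finset.sum_eq_zero fun σ _ => by simpa using hinner σ
    have h0 := hmarg.trans hRHS
    have h1 := (mul_eq_zero.mp h0).resolve_left hNR
    simpa using h1
  -- Induction from m+1 up to M
  have hstep : ∀ r : ℕ, (m : ℕ) + 1 ≤ r → r < M →
      (∑ σ : Fin M → Fin N, Pp N M q r σ * F σ = 0) →
      ∑ σ : Fin M → Fin N, Pp N M q (r + 1) σ * F σ = 0 := by
    intro r hmr hrM hzero'
    set j0 : Fin M := ⟨r, hrM⟩ with hj0
    have hcongr : ∀ σ σ' : Fin M → Fin N, (∀ j, j ≠ j0 → σ j = σ' j) →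
        ∀ j : Fin M, (j : ℕ) < r → σ j = σ' j := by
      intro σ σ' h j hj
      exact h j (by intro hjm; rw [hjm] at hj; simp [hj0] at hj)
    have hmarg := marg j0 (fun σ => Pp N M q r σ * F σ) (fun σ i => q j0 σ i)
      (by
        intro σ σ' h
        show Pp N M q r σ * F σ = Pp N M q r σ' * F σ'
        rw [Pp_congr hdep r σ σ' (hcongr σ σ' h),
          hFcongr σ σ' (fun j hj =>
            hcongr σ σ' h j (Nat.lt_of_lt_of_le (Nat.lt_succ_of_le hj) hmr))])
      (by
        intro σ σ' h
        exact hdep j0 σ σ' (fun t ht => hcongr σ σ' h t (by simpa [hj0] using ht)))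
    have heq : ∀ σ : Fin M → Fin N,
        Pp N M q (r + 1) σ * F σ
          = (Pp N M q r σ * F σ) * q j0 σ (σ j0) := by
      intro σ
      rw [Pp_succ q r hrM σ]; ring
    rw [Finset.sum_congr rfl fun σ _ => heq σ]
    have : (N : ℝ) * ∑ σ : Fin M → Fin N, (Pp N M q r σ * F σ) * q j0 σ (σ j0)
        = 0 := by
      rw [hmarg]
      simp only [hsum]
      simpa using hzero'
    have hNR : (N : ℝ) ≠ 0 := Nat.cast_ne_zero.mpr hN.ne'
    exact (mul_eq_zero.mp this).resolve_left hNR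
  have hall : ∀ r : ℕ, (m : ℕ) + 1 ≤ r → r ≤ M →
      ∑ σ : Fin M → Fin N, Pp N M q r σ * F σ = 0 := by
    intro r
    induction r with
    | zero => omega
    | succ r ih =>
      intro h1 h2
      rcases Nat.lt_or_ge (m : ℕ) r with h | h
      · exact hstep r h (by omega) (ih (by omega) (by omega))
      · have : r = (m : ℕ) := by omega
        subst this
        exact hbase
  rw [hexp, Finset.sum_congr rfl fun σ _ => by rw [← Pp_M q σ]]
  exact hall M (by omega) le_rfl
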